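/- Let M, N, P be monoidal categories, let D be an (M,P)-biactegory (left M-action •_D, right P-action ∘_D, bimodulator ζ^D), and let E be an (N,P)-biactegory (left N-action •_E, right P-action ∘_E, bimodulator ζ^E). Let [D,E]_P be the category whose objects are strong right P-linear functors (F, r) : D → E and whose morphisms are P-linear transformations. Then [D,E]_P is an (N,M)-biactegory: the left N-action sends (n, (F, r)) to the functor d ↦ n •_E F d, with right P-lineator (n •_E F d) ∘_E p ≅ n •_E (F d ∘_E p) ≅ n •_E F (d ∘_D p) obtained from (ζ^E)⁻¹ and r; the right M-action sends ((F, r), m) to the functor d ↦ F (m •_D d), with right P-lineator F(m •_D d) ∘_E p ≅ F ((m •_D d) ∘_D p) ≅ F (m •_D (d ∘_D p)) obtained from r and F((ζ^D)⁻¹); the unitors and multiplicators of these actions are given pointwise by those of E and D respectively; and the bimodulator for [D,E]_P is given pointwise by identities n •_E F(m •_D d) = n •_E F(m •_D d). All the right P-linearity conditions, actegory coherences, linearity of the structure transformations, and the four biactegory coherences hold for these data. -/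

import Mathlib

open CategoryTheory Category MonoidalCategory

universe v₁ v₂ v₃ u₁ u₂ u₃

variable (M : Type u₁) [Category.{v₁} M] [MonoidalCategory M]
variable (C : Type u₂) [Category.{v₂} C]

/-- The data of a left actegory. -/
structure LeftActegoryData where
  actObj : M → C → C
  actHom : ∀ {m n : M} {c d : C}, (m ⟶ n) → (c ⟶ d) → (actObj m c ⟶ actObj n d)
  η : ∀ c : C, c ⟶ actObj (𝟙_ M) c
  η' : ∀ c : C, actObj (𝟙_ M) c ⟶ c
  μ : ∀ (m n : M) (c : C), actObj m (actObj n c) ⟶ actObj (m ⊗ n) c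
  μ' : ∀ (m n : M) (c : C), actObj (m ⊗ n) c ⟶ actObj m (actObj n c)

variable {M C}

/-- The laws of a left actegory. -/
structure IsLeftActegory (A : LeftActegoryData M C) : Prop where
  actHom_id : ∀ (m : M) (c : C), A.actHom (𝟙 m) (𝟙 c) = 𝟙 (A.actObj m c)
  actHom_comp : ∀ {m n p : M} {c d e : C} (g : m ⟶ n) (g' : n ⟶ p) (f : c ⟶ d) (f' : d ⟶ e),
      A.actHom (g ≫ g') (f ≫ f') = A.actHom g f ≫ A.actHom g' f'
  η_iso : ∀ c, A.η c ≫ A.η' c = 𝟙 c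
  η'_iso : ∀ c, A.η' c ≫ A.η c = 𝟙 _
  μ_iso : ∀ m n c, A.μ m n c ≫ A.μ' m n c = 𝟙 _
  μ'_iso : ∀ m n c, A.μ' m n c ≫ A.μ m n c = 𝟙 _
  η_nat : ∀ {c d : C} (f : c ⟶ d), f ≫ A.η d = A.η c ≫ A.actHom (𝟙 (𝟙_ M)) f
  μ_nat : ∀ {m m' n n' : M} {c c' : C} (g : m ⟶ m') (h : n ⟶ n') (f : c ⟶ c'),
      A.actHom g (A.actHom h f) ≫ A.μ m' n' c' = A.μ m n c ≫ A.actHom (g ⊗ₘ h) f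
  pentagon : ∀ (m n p : M) (c : C),
      A.μ m n (A.actObj p c) ≫ A.μ (m ⊗ n) p c ≫ A.actHom (α_ m n p).hom (𝟙 c)
        = A.actHom (𝟙 m) (A.μ n p c) ≫ A.μ m (n ⊗ p) c
  triangle_left : ∀ (m : M) (c : C),
      A.η (A.actObj m c) ≫ A.μ (𝟙_ M) m c = A.actHom (λ_ m).inv (𝟙 c)
  triangle_right : ∀ (m : M) (c : C),
      A.actHom (𝟙 m) (A.η c) ≫ A.μ m (𝟙_ M) c = A.actHom (ρ_ m).inv (𝟙 c)


variable (N : Type u₃) [Category.{v₃} N] [MonoidalCategory N]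

variable (C) in
/-- The data of a right actegory: an action `∘ : C × N ⥤ C` together with a
unitor `c ≅ c ∘ i`, a multiplicator `(c ∘ n) ∘ m ≅ c ∘ (n ⊗ m)` and their
(candidate) inverses. -/
structure RightActegoryData where
  actObj : C → N → C
  actHom : ∀ {c d : C} {n n' : N}, (c ⟶ d) → (n ⟶ n') → (actObj c n ⟶ actObj d n')
  η : ∀ c : C, c ⟶ actObj c (𝟙_ N)
  η' : ∀ c : C, actObj c (𝟙_ N) ⟶ c
  μ : ∀ (c : C) (n m : N), actObj (actObj c n) m ⟶ actObj c (n ⊗ m)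
  μ' : ∀ (c : C) (n m : N), actObj c (n ⊗ m) ⟶ actObj (actObj c n) m

variable {N}

/-- The laws of a right actegory (i.e. the coherences making it a left actegory
over the monoidal opposite). -/
structure IsRightActegory (R : RightActegoryData C N) : Prop where
  actHom_id : ∀ (c : C) (n : N), R.actHom (𝟙 c) (𝟙 n) = 𝟙 (R.actObj c n)
  actHom_comp : ∀ {c d e : C} {n p q : N} (f : c ⟶ d) (f' : d ⟶ e) (h : n ⟶ p) (h' : p ⟶ q),
      R.actHom (f ≫ f') (h ≫ h') = R.actHom f h ≫ R.actHom f' h'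
  η_iso : ∀ c, R.η c ≫ R.η' c = 𝟙 c
  η'_iso : ∀ c, R.η' c ≫ R.η c = 𝟙 _
  μ_iso : ∀ c n m, R.μ c n m ≫ R.μ' c n m = 𝟙 _
  μ'_iso : ∀ c n m, R.μ' c n m ≫ R.μ c n m = 𝟙 _
  η_nat : ∀ {c d : C} (f : c ⟶ d), f ≫ R.η d = R.η c ≫ R.actHom f (𝟙 (𝟙_ N))
  μ_nat : ∀ {c c' : C} {n n' m m' : N} (f : c ⟶ c') (h : n ⟶ n') (k : m ⟶ m'),
      R.actHom (R.actHom f h) k ≫ R.μ c' n' m' = R.μ c n m ≫ R.actHom f (h ⊗ₘ k)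
  pentagon : ∀ (c : C) (p n m : N),
      R.μ (R.actObj c p) n m ≫ R.μ c p (n ⊗ m) ≫ R.actHom (𝟙 c) (α_ p n m).inv
        = R.actHom (R.μ c p n) (𝟙 m) ≫ R.μ c (p ⊗ n) m
  triangle_left : ∀ (c : C) (m : N),
      R.η (R.actObj c m) ≫ R.μ c m (𝟙_ N) = R.actHom (𝟙 c) (ρ_ m).inv
  triangle_right : ∀ (c : C) (m : N),
      R.actHom (R.η c) (𝟙 m) ≫ R.μ c (𝟙_ N) m = R.actHom (𝟙 c) (λ_ m).inv

/-- The data of a bimodulator relating a left `M`-action and a right `N`-action on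
the same category: a natural isomorphism `ζ : m • (c ∘ n) ≅ (m • c) ∘ n`. -/
structure BimodulatorData (A : LeftActegoryData M C) (R : RightActegoryData C N) where
  ζ : ∀ (m : M) (c : C) (n : N), A.actObj m (R.actObj c n) ⟶ R.actObj (A.actObj m c) n
  ζ' : ∀ (m : M) (c : C) (n : N), R.actObj (A.actObj m c) n ⟶ A.actObj m (R.actObj c n)

/-- The laws of a biactegory: the bimodulator is a natural isomorphism satisfying
the two pentagon and the two triangle coherence laws relating it to the
structure of the two actions. -/
structure IsBiactegory {A : LeftActegoryData M C} {R : RightActegoryData C N}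
    (Z : BimodulatorData A R) : Prop where
  ζ_iso : ∀ m c n, Z.ζ m c n ≫ Z.ζ' m c n = 𝟙 _
  ζ'_iso : ∀ m c n, Z.ζ' m c n ≫ Z.ζ m c n = 𝟙 _
  ζ_nat : ∀ {m m' : M} {c c' : C} {n n' : N} (g : m ⟶ m') (f : c ⟶ c') (h : n ⟶ n'),
      A.actHom g (R.actHom f h) ≫ Z.ζ m' c' n' = Z.ζ m c n ≫ R.actHom (A.actHom g f) h
  pentagon_left : ∀ (m n : M) (c : C) (p : N),
      A.μ m n (R.actObj c p) ≫ Z.ζ (m ⊗ n) c p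
        = A.actHom (𝟙 m) (Z.ζ n c p) ≫ Z.ζ m (A.actObj n c) p ≫ R.actHom (A.μ m n c) (𝟙 p)
  pentagon_right : ∀ (p : M) (c : C) (m n : N),
      A.actHom (𝟙 p) (R.μ c m n) ≫ Z.ζ p c (m ⊗ n)
        = Z.ζ p (R.actObj c m) n ≫ R.actHom (Z.ζ p c m) (𝟙 n) ≫ R.μ (A.actObj p c) m n
  triangle_unit_left : ∀ (c : C) (m : N),
      A.η (R.actObj c m) ≫ Z.ζ (𝟙_ M) c m = R.actHom (A.η c) (𝟙 m)
  triangle_unit_right : ∀ (m : M) (c : C),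
      A.actHom (𝟙 m) (R.η c) ≫ Z.ζ m c (𝟙_ N) = R.η (A.actObj m c)

universe v₄ v₅ u₄ u₅

variable {P : Type u₄} [Category.{v₄} P] [MonoidalCategory P]
variable {D : Type u₅} [Category.{v₅} D]

section PLinCat

/-- A strong right `P`-linear functor from the right `P`-actegory `(C, ∘_D)` to the
right `P`-actegory `(D, ∘_E)`: a functor together with an invertible lineator
satisfying the right-linearity laws. -/
structure PLin (RD : RightActegoryData C P) (RE : RightActegoryData D P)
    (hRE : IsRightActegory RE) where
  F : C ⥤ D
  r : ∀ (d : C) (p : P), RE.actObj (F.obj d) p ⟶ F.obj (RD.actObj d p)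
  r' : ∀ (d : C) (p : P), F.obj (RD.actObj d p) ⟶ RE.actObj (F.obj d) p
  r_iso : ∀ d p, r d p ≫ r' d p = 𝟙 _
  r'_iso : ∀ d p, r' d p ≫ r d p = 𝟙 _
  r_nat : ∀ {d d' : C} {p p' : P} (f : d ⟶ d') (h : p ⟶ p'),
      RE.actHom (F.map f) h ≫ r d' p' = r d p ≫ F.map (RD.actHom f h)
  r_unit : ∀ d : C, RE.η (F.obj d) ≫ r d (𝟙_ P) = F.map (RD.η d)
  r_mult : ∀ (d : C) (p q : P),
      RE.μ (F.obj d) p q ≫ r d (p ⊗ q)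
        = RE.actHom (r d p) (𝟙 q) ≫ r (RD.actObj d p) q ≫ F.map (RD.μ d p q)

variable {RD : RightActegoryData C P} {RE : RightActegoryData D P}
  {hRE : IsRightActegory RE}

/-- A `P`-linear transformation between strong right `P`-linear functors. -/
@[ext]
structure PLinHom (K K' : PLin RD RE hRE) where
  t : K.F ⟶ K'.F
  linearity : ∀ (d : C) (p : P),
      RE.actHom (t.app d) (𝟙 p) ≫ K'.r d p = K.r d p ≫ t.app (RD.actObj d p)

/-- The category `[C, D]_P` of strong right `P`-linear functors and `P`-linear
transformations. -/
instance : Category (PLin RD RE hRE) where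
  Hom := PLinHom
  id K :=
    { t := 𝟙 K.F
      linearity := fun d p => by simp [hRE.actHom_id] }
  comp {K₁ K₂ K₃} f g :=
    { t := f.t ≫ g.t
      linearity := fun d p => by
        have h : RE.actHom (f.t.app d ≫ g.t.app d) (𝟙 p)
            = RE.actHom (f.t.app d) (𝟙 p) ≫ RE.actHom (g.t.app d) (𝟙 p) := by
          rw [← hRE.actHom_comp]; simp
        simp only [NatTrans.comp_app, h, Category.assoc, g.linearity]
        rw [← Category.assoc, f.linearity, Category.assoc] }
  id_comp f := by
    apply PLinHom.ext
    show 𝟙 _ ≫ f.t = f.t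
    simp
  comp_id f := by
    apply PLinHom.ext
    show f.t ≫ 𝟙 _ = f.t
    simp
  assoc f g h := by
    apply PLinHom.ext
    show (f.t ≫ g.t) ≫ h.t = f.t ≫ g.t ≫ h.t
    simp

end PLinCat

section AuxLemmas

lemma comp_cancel_right {X Y Z' : C} {a b : X ⟶ Y} (i : Y ⟶ Z') (i' : Z' ⟶ Y)
    (hi : i ≫ i' = 𝟙 Y) (h : a ≫ i = b ≫ i) : a = b := by
  have h2 : (a ≫ i) ≫ i' = (b ≫ i) ≫ i' := by rw [h]
  simpa [hi] using h2

lemma left_hom_comp_id {A : LeftActegoryData M C} (hA : IsLeftActegory A)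
    {m : M} {c d e : C} (f : c ⟶ d) (g : d ⟶ e) :
    A.actHom (𝟙 m) f ≫ A.actHom (𝟙 m) g = A.actHom (𝟙 m) (f ≫ g) := by
  rw [← hA.actHom_comp, comp_id]

lemma right_hom_comp_id {R : RightActegoryData C N} (hR : IsRightActegory R)
    {p : N} {c d e : C} (f : c ⟶ d) (g : d ⟶ e) :
    R.actHom f (𝟙 p) ≫ R.actHom g (𝟙 p) = R.actHom (f ≫ g) (𝟙 p) := by
  rw [← hR.actHom_comp, comp_id]

lemma left_eta'_nat {A : LeftActegoryData M C} (hA : IsLeftActegory A)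
    {c d : C} (f : c ⟶ d) :
    A.actHom (𝟙 (𝟙_ M)) f ≫ A.η' d = A.η' c ≫ f := by
  apply comp_cancel_right (A.η d) (A.η' d) (hA.η_iso d)
  rw [assoc, hA.η'_iso, comp_id, assoc, hA.η_nat, ← assoc, hA.η'_iso, id_comp]

lemma left_mu'_nat {A : LeftActegoryData M C} (hA : IsLeftActegory A)
    {m m' n n' : M} {c c' : C} (g : m ⟶ m') (h : n ⟶ n') (f : c ⟶ c') :
    A.actHom (g ⊗ₘ h) f ≫ A.μ' m' n' c' = A.μ' m n c ≫ A.actHom g (A.actHom h f) := by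
  apply comp_cancel_right (A.μ m' n' c') (A.μ' m' n' c') (hA.μ_iso m' n' c')
  rw [assoc, hA.μ'_iso, comp_id, assoc, hA.μ_nat, ← assoc, hA.μ'_iso, id_comp]

section Bimod
variable {A : LeftActegoryData M C} {R : RightActegoryData C N} {Z : BimodulatorData A R}

lemma zeta'_nat (hZ : IsBiactegory Z)
    {m m' : M} {c c' : C} {n n' : N} (g : m ⟶ m') (f : c ⟶ c') (h : n ⟶ n') :
    R.actHom (A.actHom g f) h ≫ Z.ζ' m' c' n' = Z.ζ' m c n ≫ A.actHom g (R.actHom f h) := by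
  apply comp_cancel_right (Z.ζ m' c' n') _ (hZ.ζ_iso m' c' n')
  rw [assoc, hZ.ζ'_iso, comp_id, assoc, hZ.ζ_nat, ← assoc, hZ.ζ'_iso, id_comp]

lemma zeta'_pentagon_left (hA : IsLeftActegory A) (hZ : IsBiactegory Z)
    (m n : M) (c : C) (p : N) :
    R.actHom (A.μ m n c) (𝟙 p) ≫ Z.ζ' (m ⊗ n) c p
      = Z.ζ' m (A.actObj n c) p ≫ A.actHom (𝟙 m) (Z.ζ' n c p) ≫ A.μ m n (R.actObj c p) := by
  apply comp_cancel_right (Z.ζ (m ⊗ n) c p) _ (hZ.ζ_iso (m ⊗ n) c p)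
  rw [assoc, hZ.ζ'_iso, comp_id, assoc, assoc, hZ.pentagon_left,
    ← assoc (A.actHom (𝟙 m) (Z.ζ' n c p)), left_hom_comp_id hA, hZ.ζ'_iso, hA.actHom_id,
    id_comp, ← assoc, hZ.ζ'_iso, id_comp]

lemma zeta'_pentagon_right (hR : IsRightActegory R) (hZ : IsBiactegory Z)
    (m : M) (c : C) (p q : N) :
    R.μ (A.actObj m c) p q ≫ Z.ζ' m c (p ⊗ q)
      = R.actHom (Z.ζ' m c p) (𝟙 q) ≫ Z.ζ' m (R.actObj c p) q ≫ A.actHom (𝟙 m) (R.μ c p q) := by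
  apply comp_cancel_right (Z.ζ m c (p ⊗ q)) _ (hZ.ζ_iso m c (p ⊗ q))
  rw [assoc, hZ.ζ'_iso, comp_id, assoc, assoc, hZ.pentagon_right,
    ← assoc (Z.ζ' m (R.actObj c p) q), hZ.ζ'_iso, id_comp,
    ← assoc, right_hom_comp_id hR, hZ.ζ'_iso, hR.actHom_id, id_comp]

lemma zeta'_unit_left (hZ : IsBiactegory Z) (c : C) (n : N) :
    R.actHom (A.η c) (𝟙 n) ≫ Z.ζ' (𝟙_ M) c n = A.η (R.actObj c n) := by
  rw [← hZ.triangle_unit_left, assoc, hZ.ζ_iso, comp_id]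

lemma zeta'_unit_right (hZ : IsBiactegory Z) (m : M) (c : C) :
    R.η (A.actObj m c) ≫ Z.ζ' m c (𝟙_ N) = A.actHom (𝟙 m) (R.η c) := by
  rw [← hZ.triangle_unit_right, assoc, hZ.ζ_iso, comp_id]

end Bimod

lemma lin_inv {RE : RightActegoryData D P}
    (hRE' : IsRightActegory RE)
    {c₁ c₂ d₁ d₂ : D} {p : P}
    {a : c₁ ⟶ c₂} {a' : c₂ ⟶ c₁} {b : d₁ ⟶ d₂} {b' : d₂ ⟶ d₁}
    {r₁ : RE.actObj c₁ p ⟶ d₁} {r₂ : RE.actObj c₂ p ⟶ d₂}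
    (haa : a' ≫ a = 𝟙 _) (hbb : b ≫ b' = 𝟙 _)
    (h : RE.actHom a (𝟙 p) ≫ r₂ = r₁ ≫ b) :
    RE.actHom a' (𝟙 p) ≫ r₁ = r₂ ≫ b' := by
  have h2 : RE.actHom a' (𝟙 p) ≫ (r₁ ≫ b) ≫ b' = r₂ ≫ b' := by
    rw [← h, ← assoc, ← assoc, ← hRE'.actHom_comp, haa]
    simp [hRE'.actHom_id]
  simpa [hbb] using h2

end AuxLemmas

section Construction

variable {RD : RightActegoryData C P} {RE : RightActegoryData D P} {hRE : IsRightActegory RE}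

/-- The left `N`-action on `[C,D]_P`, on objects. -/
def Lobj (AE : LeftActegoryData N D) (hAE : IsLeftActegory AE)
    (ZE : BimodulatorData AE RE) (hZE : IsBiactegory ZE)
    (n : N) (K : PLin RD RE hRE) : PLin RD RE hRE where
  F :=
    { obj := fun d => AE.actObj n (K.F.obj d)
      map := fun f => AE.actHom (𝟙 n) (K.F.map f)
      map_id := fun d => by
        show AE.actHom (𝟙 n) (K.F.map (𝟙 d)) = 𝟙 (AE.actObj n (K.F.obj d))
        rw [K.F.map_id, hAE.actHom_id]
      map_comp := fun f g => by
        show AE.actHom (𝟙 n) (K.F.map (f ≫ g))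
          = AE.actHom (𝟙 n) (K.F.map f) ≫ AE.actHom (𝟙 n) (K.F.map g)
        rw [K.F.map_comp, ← left_hom_comp_id hAE] }
  r d p := ZE.ζ' n (K.F.obj d) p ≫ AE.actHom (𝟙 n) (K.r d p)
  r' d p := AE.actHom (𝟙 n) (K.r' d p) ≫ ZE.ζ n (K.F.obj d) p
  r_iso d p := by
    rw [assoc, ← assoc (AE.actHom (𝟙 n) (K.r d p)), left_hom_comp_id hAE, K.r_iso,
      hAE.actHom_id, id_comp, hZE.ζ'_iso]
  r'_iso d p := by
    rw [assoc, ← assoc (ZE.ζ n (K.F.obj d) p), hZE.ζ_iso, id_comp,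
      left_hom_comp_id hAE, K.r'_iso, hAE.actHom_id]
  r_nat {d d' p p'} f h := by
    rw [← assoc, zeta'_nat hZE, assoc, left_hom_comp_id hAE, K.r_nat,
      ← left_hom_comp_id hAE, ← assoc]
  r_unit d := by
    rw [← assoc, zeta'_unit_right hZE, left_hom_comp_id hAE, K.r_unit]
  r_mult d p q := by
    show RE.μ (AE.actObj n (K.F.obj d)) p q
          ≫ ZE.ζ' n (K.F.obj d) (p ⊗ q) ≫ AE.actHom (𝟙 n) (K.r d (p ⊗ q))
        = RE.actHom (ZE.ζ' n (K.F.obj d) p ≫ AE.actHom (𝟙 n) (K.r d p)) (𝟙 q)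
          ≫ (ZE.ζ' n (K.F.obj (RD.actObj d p)) q ≫ AE.actHom (𝟙 n) (K.r (RD.actObj d p) q))
          ≫ AE.actHom (𝟙 n) (K.F.map (RD.μ d p q))
    rw [← assoc, zeta'_pentagon_right hRE hZE, assoc, assoc, left_hom_comp_id hAE,
      K.r_mult]
    conv_rhs => rw [← right_hom_comp_id hRE, assoc, assoc,
      ← assoc (RE.actHom (AE.actHom (𝟙 n) (K.r d p)) (𝟙 q)), zeta'_nat hZE, assoc]
    congr 2
    rw [left_hom_comp_id hAE, left_hom_comp_id hAE]

/-- The left `N`-action on `[C,D]_P`, on morphisms. -/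
def LactHom (AE : LeftActegoryData N D) (hAE : IsLeftActegory AE)
    (ZE : BimodulatorData AE RE) (hZE : IsBiactegory ZE)
    {n n' : N} (g : n ⟶ n') {K K' : PLin RD RE hRE} (ξ : K ⟶ K') :
    Lobj AE hAE ZE hZE n K ⟶ Lobj AE hAE ZE hZE n' K' :=
  PLinHom.mk
    { app := fun d => AE.actHom g (ξ.t.app d)
      naturality := fun d d' f => by
        show AE.actHom (𝟙 n) (K.F.map f) ≫ AE.actHom g (ξ.t.app d')
          = AE.actHom g (ξ.t.app d) ≫ AE.actHom (𝟙 n') (K'.F.map f)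
        rw [← hAE.actHom_comp, ← hAE.actHom_comp, id_comp, comp_id, ξ.t.naturality] }
    (fun d p => by
      show RE.actHom (AE.actHom g (ξ.t.app d)) (𝟙 p)
            ≫ ZE.ζ' n' (K'.F.obj d) p ≫ AE.actHom (𝟙 n') (K'.r d p)
          = (ZE.ζ' n (K.F.obj d) p ≫ AE.actHom (𝟙 n) (K.r d p))
            ≫ AE.actHom g (ξ.t.app (RD.actObj d p))
      rw [← assoc, zeta'_nat hZE, assoc, ← hAE.actHom_comp, comp_id, ξ.linearity,
        assoc, ← hAE.actHom_comp, id_comp])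

/-- The left `N`-actegory structure on `[C,D]_P`. -/
def Lact (AE : LeftActegoryData N D) (hAE : IsLeftActegory AE)
    (ZE : BimodulatorData AE RE) (hZE : IsBiactegory ZE) :
    LeftActegoryData N (PLin RD RE hRE) where
  actObj := Lobj AE hAE ZE hZE
  actHom := fun g ξ => LactHom AE hAE ZE hZE g ξ
  η K :=
    PLinHom.mk
      { app := fun d => AE.η (K.F.obj d)
        naturality := fun d d' f => by
          show K.F.map f ≫ AE.η (K.F.obj d') = AE.η (K.F.obj d) ≫ AE.actHom (𝟙 (𝟙_ N)) (K.F.map f)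
          rw [hAE.η_nat] }
      (fun d p => by
        show RE.actHom (AE.η (K.F.obj d)) (𝟙 p)
              ≫ ZE.ζ' (𝟙_ N) (K.F.obj d) p ≫ AE.actHom (𝟙 (𝟙_ N)) (K.r d p)
            = K.r d p ≫ AE.η (K.F.obj (RD.actObj d p))
        rw [← assoc, zeta'_unit_left hZE, ← hAE.η_nat])
  η' K :=
    PLinHom.mk
      { app := fun d => AE.η' (K.F.obj d)
        naturality := fun d d' f => by
          show AE.actHom (𝟙 (𝟙_ N)) (K.F.map f) ≫ AE.η' (K.F.obj d')
            = AE.η' (K.F.obj d) ≫ K.F.map f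
          rw [left_eta'_nat hAE] }
      (fun d p =>
        lin_inv hRE (hAE.η'_iso _) (hAE.η_iso _)
          (by
            show RE.actHom (AE.η (K.F.obj d)) (𝟙 p)
                  ≫ ZE.ζ' (𝟙_ N) (K.F.obj d) p ≫ AE.actHom (𝟙 (𝟙_ N)) (K.r d p)
                = K.r d p ≫ AE.η (K.F.obj (RD.actObj d p))
            rw [← assoc, zeta'_unit_left hZE, ← hAE.η_nat]))
  μ n n' K :=
    PLinHom.mk
      { app := fun d => AE.μ n n' (K.F.obj d)
        naturality := fun d d' f => by
          show AE.actHom (𝟙 n) (AE.actHom (𝟙 n') (K.F.map f)) ≫ AE.μ n n' (K.F.obj d')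
            = AE.μ n n' (K.F.obj d) ≫ AE.actHom (𝟙 (n ⊗ n')) (K.F.map f)
          rw [hAE.μ_nat, MonoidalCategory.id_tensorHom_id] }
      (fun d p => by
        show RE.actHom (AE.μ n n' (K.F.obj d)) (𝟙 p)
              ≫ ZE.ζ' (n ⊗ n') (K.F.obj d) p ≫ AE.actHom (𝟙 (n ⊗ n')) (K.r d p)
            = (ZE.ζ' n (AE.actObj n' (K.F.obj d)) p
                ≫ AE.actHom (𝟙 n) (ZE.ζ' n' (K.F.obj d) p ≫ AE.actHom (𝟙 n') (K.r d p)))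
              ≫ AE.μ n n' (K.F.obj (RD.actObj d p))
        rw [← assoc, zeta'_pentagon_left hAE hZE, assoc, assoc,
          ← MonoidalCategory.id_tensorHom_id, ← hAE.μ_nat, ← left_hom_comp_id hAE, assoc, assoc])
  μ' n n' K :=
    PLinHom.mk
      { app := fun d => AE.μ' n n' (K.F.obj d)
        naturality := fun d d' f => by
          show AE.actHom (𝟙 (n ⊗ n')) (K.F.map f) ≫ AE.μ' n n' (K.F.obj d')
            = AE.μ' n n' (K.F.obj d) ≫ AE.actHom (𝟙 n) (AE.actHom (𝟙 n') (K.F.map f))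
          rw [← MonoidalCategory.id_tensorHom_id, left_mu'_nat hAE] }
      (fun d p =>
        lin_inv hRE (hAE.μ'_iso _ _ _) (hAE.μ_iso _ _ _)
          (by
            show RE.actHom (AE.μ n n' (K.F.obj d)) (𝟙 p)
                  ≫ ZE.ζ' (n ⊗ n') (K.F.obj d) p ≫ AE.actHom (𝟙 (n ⊗ n')) (K.r d p)
                = (ZE.ζ' n (AE.actObj n' (K.F.obj d)) p
                    ≫ AE.actHom (𝟙 n) (ZE.ζ' n' (K.F.obj d) p ≫ AE.actHom (𝟙 n') (K.r d p)))
                  ≫ AE.μ n n' (K.F.obj (RD.actObj d p))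
            rw [← assoc, zeta'_pentagon_left hAE hZE, assoc, assoc,
              ← MonoidalCategory.id_tensorHom_id, ← hAE.μ_nat, ← left_hom_comp_id hAE, assoc, assoc]))


/-- The right `M`-action on `[C,D]_P`, on objects. -/
def Robj (AD : LeftActegoryData M C) (hAD : IsLeftActegory AD)
    (hRD : IsRightActegory RD) (ZD : BimodulatorData AD RD) (hZD : IsBiactegory ZD)
    (K : PLin RD RE hRE) (m : M) : PLin RD RE hRE where
  F :=
    { obj := fun d => K.F.obj (AD.actObj m d)
      map := fun f => K.F.map (AD.actHom (𝟙 m) f)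
      map_id := fun d => by
        show K.F.map (AD.actHom (𝟙 m) (𝟙 d)) = 𝟙 (K.F.obj (AD.actObj m d))
        rw [hAD.actHom_id, K.F.map_id]
      map_comp := fun f g => by
        show K.F.map (AD.actHom (𝟙 m) (f ≫ g))
          = K.F.map (AD.actHom (𝟙 m) f) ≫ K.F.map (AD.actHom (𝟙 m) g)
        rw [← left_hom_comp_id hAD, K.F.map_comp] }
  r d p := K.r (AD.actObj m d) p ≫ K.F.map (ZD.ζ' m d p)
  r' d p := K.F.map (ZD.ζ m d p) ≫ K.r' (AD.actObj m d) p
  r_iso d p := by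
    rw [assoc, ← assoc (K.F.map (ZD.ζ' m d p)), ← K.F.map_comp, hZD.ζ'_iso, K.F.map_id,
      id_comp, K.r_iso]
  r'_iso d p := by
    rw [assoc, ← assoc (K.r' (AD.actObj m d) p), K.r'_iso, id_comp, ← K.F.map_comp,
      hZD.ζ_iso, K.F.map_id]
  r_nat {d d' p p'} f h := by
    show RE.actHom (K.F.map (AD.actHom (𝟙 m) f)) h ≫ K.r (AD.actObj m d') p' ≫ K.F.map (ZD.ζ' m d' p')
        = (K.r (AD.actObj m d) p ≫ K.F.map (ZD.ζ' m d p)) ≫ K.F.map (AD.actHom (𝟙 m) (RD.actHom f h))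
    rw [← assoc, K.r_nat, assoc, ← K.F.map_comp, zeta'_nat hZD, K.F.map_comp, assoc]
  r_unit d := by
    show RE.η (K.F.obj (AD.actObj m d)) ≫ K.r (AD.actObj m d) (𝟙_ P) ≫ K.F.map (ZD.ζ' m d (𝟙_ P))
        = K.F.map (AD.actHom (𝟙 m) (RD.η d))
    rw [← assoc, K.r_unit, ← K.F.map_comp, zeta'_unit_right hZD]
  r_mult d p q := by
    show RE.μ (K.F.obj (AD.actObj m d)) p q
          ≫ K.r (AD.actObj m d) (p ⊗ q) ≫ K.F.map (ZD.ζ' m d (p ⊗ q))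
        = RE.actHom (K.r (AD.actObj m d) p ≫ K.F.map (ZD.ζ' m d p)) (𝟙 q)
          ≫ (K.r (AD.actObj m (RD.actObj d p)) q ≫ K.F.map (ZD.ζ' m (RD.actObj d p) q))
          ≫ K.F.map (AD.actHom (𝟙 m) (RD.μ d p q))
    rw [← assoc, K.r_mult, assoc, assoc, ← K.F.map_comp, zeta'_pentagon_right hRD hZD]
    conv_rhs => rw [← right_hom_comp_id hRE, assoc, assoc,
      ← assoc (RE.actHom (K.F.map (ZD.ζ' m d p)) (𝟙 q)), K.r_nat, assoc,
      ← assoc (K.F.map (RD.actHom (ZD.ζ' m d p) (𝟙 q))), ← K.F.map_comp,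
      ← K.F.map_comp, assoc]

/-- The right `M`-action on `[C,D]_P`, on morphisms. -/
def RactHom (AD : LeftActegoryData M C) (hAD : IsLeftActegory AD)
    (hRD : IsRightActegory RD) (ZD : BimodulatorData AD RD) (hZD : IsBiactegory ZD)
    {K K' : PLin RD RE hRE} (ξ : K ⟶ K') {m m' : M} (g : m ⟶ m') :
    Robj AD hAD hRD ZD hZD K m ⟶ Robj AD hAD hRD ZD hZD K' m' :=
  PLinHom.mk
    { app := fun d => K.F.map (AD.actHom g (𝟙 d)) ≫ ξ.t.app (AD.actObj m' d)
      naturality := fun d d' f => by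
        show K.F.map (AD.actHom (𝟙 m) f) ≫ K.F.map (AD.actHom g (𝟙 d')) ≫ ξ.t.app (AD.actObj m' d')
          = (K.F.map (AD.actHom g (𝟙 d)) ≫ ξ.t.app (AD.actObj m' d)) ≫ K'.F.map (AD.actHom (𝟙 m') f)
        rw [assoc, ← ξ.t.naturality, ← assoc, ← K.F.map_comp, ← hAD.actHom_comp,
          id_comp, comp_id, ← comp_id g, ← id_comp f, hAD.actHom_comp, K.F.map_comp, assoc]
        simp only [comp_id, id_comp] }
    (fun d p => by
      show RE.actHom (K.F.map (AD.actHom g (𝟙 d)) ≫ ξ.t.app (AD.actObj m' d)) (𝟙 p)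
            ≫ K'.r (AD.actObj m' d) p ≫ K'.F.map (ZD.ζ' m' d p)
          = (K.r (AD.actObj m d) p ≫ K.F.map (ZD.ζ' m d p))
            ≫ K.F.map (AD.actHom g (𝟙 (RD.actObj d p))) ≫ ξ.t.app (AD.actObj m' (RD.actObj d p))
      rw [← right_hom_comp_id hRE, assoc, ← assoc (RE.actHom (ξ.t.app (AD.actObj m' d)) (𝟙 p)),
        ξ.linearity, assoc, ← ξ.t.naturality]
      conv_lhs => rw [← assoc (RE.actHom (K.F.map (AD.actHom g (𝟙 d))) (𝟙 p)), K.r_nat,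
        assoc, ← assoc (K.F.map (RD.actHom (AD.actHom g (𝟙 d)) (𝟙 p))), ← K.F.map_comp]
      conv_rhs => rw [assoc, ← assoc (K.F.map (ZD.ζ' m d p)), ← K.F.map_comp]
      rw [zeta'_nat hZD, hRD.actHom_id])

/-- The right `M`-actegory structure on `[C,D]_P`. -/
def Ract (AD : LeftActegoryData M C) (hAD : IsLeftActegory AD)
    (hRD : IsRightActegory RD) (ZD : BimodulatorData AD RD) (hZD : IsBiactegory ZD) :
    RightActegoryData (PLin RD RE hRE) M where
  actObj := Robj AD hAD hRD ZD hZD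
  actHom := fun ξ g => RactHom AD hAD hRD ZD hZD ξ g
  η K :=
    PLinHom.mk
      { app := fun d => K.F.map (AD.η d)
        naturality := fun d d' f => by
          show K.F.map f ≫ K.F.map (AD.η d') = K.F.map (AD.η d) ≫ K.F.map (AD.actHom (𝟙 (𝟙_ M)) f)
          rw [← K.F.map_comp, ← K.F.map_comp, hAD.η_nat] }
      (fun d p => by
        show RE.actHom (K.F.map (AD.η d)) (𝟙 p)
              ≫ K.r (AD.actObj (𝟙_ M) d) p ≫ K.F.map (ZD.ζ' (𝟙_ M) d p)
            = K.r d p ≫ K.F.map (AD.η (RD.actObj d p))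
        rw [← assoc, K.r_nat, assoc, ← K.F.map_comp, zeta'_unit_left hZD])
  η' K :=
    PLinHom.mk
      { app := fun d => K.F.map (AD.η' d)
        naturality := fun d d' f => by
          show K.F.map (AD.actHom (𝟙 (𝟙_ M)) f) ≫ K.F.map (AD.η' d') = K.F.map (AD.η' d) ≫ K.F.map f
          rw [← K.F.map_comp, ← K.F.map_comp, left_eta'_nat hAD] }
      (fun d p =>
        lin_inv hRE (a := K.F.map (AD.η d)) (b := K.F.map (AD.η (RD.actObj d p)))
          (by show K.F.map (AD.η' d) ≫ K.F.map (AD.η d) = 𝟙 _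
              rw [← K.F.map_comp, hAD.η'_iso, K.F.map_id]; try rfl)
          (by show K.F.map (AD.η (RD.actObj d p)) ≫ K.F.map (AD.η' (RD.actObj d p)) = 𝟙 _
              rw [← K.F.map_comp, hAD.η_iso, K.F.map_id]; try rfl)
          (by
            show RE.actHom (K.F.map (AD.η d)) (𝟙 p)
                  ≫ K.r (AD.actObj (𝟙_ M) d) p ≫ K.F.map (ZD.ζ' (𝟙_ M) d p)
                = K.r d p ≫ K.F.map (AD.η (RD.actObj d p))
            rw [← assoc, K.r_nat, assoc, ← K.F.map_comp, zeta'_unit_left hZD]))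
  μ K m m' :=
    PLinHom.mk
      { app := fun d => K.F.map (AD.μ m m' d)
        naturality := fun d d' f => by
          show K.F.map (AD.actHom (𝟙 m) (AD.actHom (𝟙 m') f)) ≫ K.F.map (AD.μ m m' d')
            = K.F.map (AD.μ m m' d) ≫ K.F.map (AD.actHom (𝟙 (m ⊗ m')) f)
          rw [← K.F.map_comp, ← K.F.map_comp, hAD.μ_nat, MonoidalCategory.id_tensorHom_id] }
      (fun d p => by
        show RE.actHom (K.F.map (AD.μ m m' d)) (𝟙 p)
              ≫ K.r (AD.actObj (m ⊗ m') d) p ≫ K.F.map (ZD.ζ' (m ⊗ m') d p)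
            = ((K.r (AD.actObj m (AD.actObj m' d)) p ≫ K.F.map (ZD.ζ' m (AD.actObj m' d) p))
                ≫ K.F.map (AD.actHom (𝟙 m) (ZD.ζ' m' d p)))
              ≫ K.F.map (AD.μ m m' (RD.actObj d p))
        rw [← assoc, K.r_nat, assoc, ← K.F.map_comp, zeta'_pentagon_left hAD hZD,
          assoc, assoc, K.F.map_comp, K.F.map_comp])
  μ' K m m' :=
    PLinHom.mk
      { app := fun d => K.F.map (AD.μ' m m' d)
        naturality := fun d d' f => by
          show K.F.map (AD.actHom (𝟙 (m ⊗ m')) f) ≫ K.F.map (AD.μ' m m' d')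
            = K.F.map (AD.μ' m m' d) ≫ K.F.map (AD.actHom (𝟙 m) (AD.actHom (𝟙 m') f))
          rw [← K.F.map_comp, ← K.F.map_comp, ← MonoidalCategory.id_tensorHom_id, left_mu'_nat hAD] }
      (fun d p =>
        lin_inv hRE (a := K.F.map (AD.μ m m' d)) (b := K.F.map (AD.μ m m' (RD.actObj d p)))
          (by show K.F.map (AD.μ' m m' d) ≫ K.F.map (AD.μ m m' d) = 𝟙 _
              rw [← K.F.map_comp, hAD.μ'_iso, K.F.map_id]; try rfl)
          (by show K.F.map (AD.μ m m' (RD.actObj d p)) ≫ K.F.map (AD.μ' m m' (RD.actObj d p)) = 𝟙 _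
              rw [← K.F.map_comp, hAD.μ_iso, K.F.map_id]; try rfl)
          (by
            show RE.actHom (K.F.map (AD.μ m m' d)) (𝟙 p)
                  ≫ K.r (AD.actObj (m ⊗ m') d) p ≫ K.F.map (ZD.ζ' (m ⊗ m') d p)
                = ((K.r (AD.actObj m (AD.actObj m' d)) p ≫ K.F.map (ZD.ζ' m (AD.actObj m' d) p))
                    ≫ K.F.map (AD.actHom (𝟙 m) (ZD.ζ' m' d p)))
                  ≫ K.F.map (AD.μ m m' (RD.actObj d p))
            rw [← assoc, K.r_nat, assoc, ← K.F.map_comp, zeta'_pentagon_left hAD hZD,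
              assoc, assoc, K.F.map_comp, K.F.map_comp]))


lemma plin_hom_ext {K K' : PLin RD RE hRE} {f g : K ⟶ K'}
    (h : ∀ d, f.t.app d = g.t.app d) : f = g :=
  PLinHom.ext (NatTrans.ext (funext h))

lemma left_pentagon_inv {A : LeftActegoryData M C} (hA : IsLeftActegory A)
    (m n p : M) (c : C) :
    A.actHom (𝟙 m) (A.μ n p c) ≫ A.μ m (n ⊗ p) c ≫ A.actHom (α_ m n p).inv (𝟙 c)
      = A.μ m n (A.actObj p c) ≫ A.μ (m ⊗ n) p c := by
  rw [← assoc, ← hA.pentagon, assoc, assoc, ← hA.actHom_comp, Iso.hom_inv_id, comp_id,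
    hA.actHom_id, comp_id]

/-- The bimodulator on `[C,D]_P`, pointwise the identity. -/
def Zmod (AD : LeftActegoryData M C) (hAD : IsLeftActegory AD)
    (hRD : IsRightActegory RD) (ZD : BimodulatorData AD RD) (hZD : IsBiactegory ZD)
    (AE : LeftActegoryData N D) (hAE : IsLeftActegory AE)
    (ZE : BimodulatorData AE RE) (hZE : IsBiactegory ZE) :
    BimodulatorData (Lact (hRE := hRE) AE hAE ZE hZE) (Ract (hRE := hRE) AD hAD hRD ZD hZD) where
  ζ n K m :=
    PLinHom.mk
      { app := fun d => 𝟙 (AE.actObj n (K.F.obj (AD.actObj m d)))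
        naturality := fun d d' f => by
          show AE.actHom (𝟙 n) (K.F.map (AD.actHom (𝟙 m) f)) ≫ 𝟙 _
            = 𝟙 _ ≫ AE.actHom (𝟙 n) (K.F.map (AD.actHom (𝟙 m) f))
          rw [comp_id, id_comp] }
      (fun d p => by
        show RE.actHom (𝟙 (AE.actObj n (K.F.obj (AD.actObj m d)))) (𝟙 p)
              ≫ (ZE.ζ' n (K.F.obj (AD.actObj m d)) p
                  ≫ AE.actHom (𝟙 n) (K.r (AD.actObj m d) p))
                ≫ AE.actHom (𝟙 n) (K.F.map (ZD.ζ' m d p))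
            = (ZE.ζ' n (K.F.obj (AD.actObj m d)) p
                ≫ AE.actHom (𝟙 n) (K.r (AD.actObj m d) p ≫ K.F.map (ZD.ζ' m d p)))
              ≫ 𝟙 _
        rw [hRE.actHom_id, id_comp, comp_id, assoc, left_hom_comp_id hAE])
  ζ' n K m :=
    PLinHom.mk
      { app := fun d => 𝟙 (AE.actObj n (K.F.obj (AD.actObj m d)))
        naturality := fun d d' f => by
          show AE.actHom (𝟙 n) (K.F.map (AD.actHom (𝟙 m) f)) ≫ 𝟙 _
            = 𝟙 _ ≫ AE.actHom (𝟙 n) (K.F.map (AD.actHom (𝟙 m) f))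
          rw [comp_id, id_comp] }
      (fun d p => by
        show RE.actHom (𝟙 (AE.actObj n (K.F.obj (AD.actObj m d)))) (𝟙 p)
              ≫ ZE.ζ' n (K.F.obj (AD.actObj m d)) p
                ≫ AE.actHom (𝟙 n) (K.r (AD.actObj m d) p ≫ K.F.map (ZD.ζ' m d p))
            = ((ZE.ζ' n (K.F.obj (AD.actObj m d)) p
                  ≫ AE.actHom (𝟙 n) (K.r (AD.actObj m d) p))
                ≫ AE.actHom (𝟙 n) (K.F.map (ZD.ζ' m d p)))
              ≫ 𝟙 _
        rw [hRE.actHom_id, id_comp, comp_id, assoc, left_hom_comp_id hAE])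


lemma isLeft_Lact (AE : LeftActegoryData N D) (hAE : IsLeftActegory AE)
    (ZE : BimodulatorData AE RE) (hZE : IsBiactegory ZE) :
    IsLeftActegory (Lact (RD := RD) (hRE := hRE) AE hAE ZE hZE) where
  actHom_id n K := plin_hom_ext fun d => hAE.actHom_id n (K.F.obj d)
  actHom_comp g g' ξ ξ' := plin_hom_ext fun d => hAE.actHom_comp g g' (ξ.t.app d) (ξ'.t.app d)
  η_iso K := plin_hom_ext fun d => hAE.η_iso (K.F.obj d)
  η'_iso K := plin_hom_ext fun d => hAE.η'_iso (K.F.obj d)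
  μ_iso n n' K := plin_hom_ext fun d => hAE.μ_iso n n' (K.F.obj d)
  μ'_iso n n' K := plin_hom_ext fun d => hAE.μ'_iso n n' (K.F.obj d)
  η_nat ξ := plin_hom_ext fun d => hAE.η_nat (ξ.t.app d)
  μ_nat g h ξ := plin_hom_ext fun d => hAE.μ_nat g h (ξ.t.app d)
  pentagon m n p K := plin_hom_ext fun d => hAE.pentagon m n p (K.F.obj d)
  triangle_left m K := plin_hom_ext fun d => hAE.triangle_left m (K.F.obj d)
  triangle_right m K := plin_hom_ext fun d => hAE.triangle_right m (K.F.obj d)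

lemma isRight_Ract (AD : LeftActegoryData M C) (hAD : IsLeftActegory AD)
    (hRD : IsRightActegory RD) (ZD : BimodulatorData AD RD) (hZD : IsBiactegory ZD) :
    IsRightActegory (Ract (RE := RE) (hRE := hRE) AD hAD hRD ZD hZD) where
  actHom_id K m := plin_hom_ext fun d => by
    show K.F.map (AD.actHom (𝟙 m) (𝟙 d)) ≫ 𝟙 (K.F.obj (AD.actObj m d)) = 𝟙 (K.F.obj (AD.actObj m d))
    rw [comp_id, hAD.actHom_id, K.F.map_id]
  actHom_comp {K K' K'' n p q} ξ ξ' h h' := plin_hom_ext fun d => by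
    show K.F.map (AD.actHom (h ≫ h') (𝟙 d))
          ≫ ξ.t.app (AD.actObj q d) ≫ ξ'.t.app (AD.actObj q d)
        = (K.F.map (AD.actHom h (𝟙 d)) ≫ ξ.t.app (AD.actObj p d))
          ≫ K'.F.map (AD.actHom h' (𝟙 d)) ≫ ξ'.t.app (AD.actObj q d)
    rw [assoc, ← assoc (ξ.t.app (AD.actObj p d)), ← ξ.t.naturality, assoc,
      ← assoc (K.F.map (AD.actHom h (𝟙 d))), ← K.F.map_comp, ← hAD.actHom_comp, comp_id]
  η_iso K := plin_hom_ext fun d => by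
    show K.F.map (AD.η d) ≫ K.F.map (AD.η' d) = 𝟙 (K.F.obj d)
    rw [← K.F.map_comp, hAD.η_iso, K.F.map_id]
  η'_iso K := plin_hom_ext fun d => by
    show K.F.map (AD.η' d) ≫ K.F.map (AD.η d) = 𝟙 (K.F.obj (AD.actObj (𝟙_ M) d))
    rw [← K.F.map_comp, hAD.η'_iso, K.F.map_id]
  μ_iso K m m' := plin_hom_ext fun d => by
    show K.F.map (AD.μ m m' d) ≫ K.F.map (AD.μ' m m' d) = 𝟙 _
    rw [← K.F.map_comp, hAD.μ_iso, K.F.map_id]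
  μ'_iso K m m' := plin_hom_ext fun d => by
    show K.F.map (AD.μ' m m' d) ≫ K.F.map (AD.μ m m' d) = 𝟙 _
    rw [← K.F.map_comp, hAD.μ'_iso, K.F.map_id]
  η_nat {K K'} ξ := plin_hom_ext fun d => by
    show ξ.t.app d ≫ K'.F.map (AD.η d)
        = K.F.map (AD.η d) ≫ K.F.map (AD.actHom (𝟙 (𝟙_ M)) (𝟙 d)) ≫ ξ.t.app (AD.actObj (𝟙_ M) d)
    rw [hAD.actHom_id, K.F.map_id, id_comp, ξ.t.naturality]
  μ_nat {K K' n n' m m'} ξ h k := plin_hom_ext fun d => by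
    show (K.F.map (AD.actHom (𝟙 n) (AD.actHom k (𝟙 d)))
            ≫ K.F.map (AD.actHom h (𝟙 (AD.actObj m' d))) ≫ ξ.t.app (AD.actObj n' (AD.actObj m' d)))
          ≫ K'.F.map (AD.μ n' m' d)
        = K.F.map (AD.μ n m d)
          ≫ K.F.map (AD.actHom (h ⊗ₘ k) (𝟙 d)) ≫ ξ.t.app (AD.actObj (n' ⊗ m') d)
    conv_lhs => rw [assoc, assoc, ← ξ.t.naturality,
      ← assoc (K.F.map (AD.actHom h (𝟙 (AD.actObj m' d)))), ← K.F.map_comp,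
      ← assoc (K.F.map (AD.actHom (𝟙 n) (AD.actHom k (𝟙 d)))), ← K.F.map_comp,
      ← assoc (AD.actHom (𝟙 n) (AD.actHom k (𝟙 d))), ← hAD.actHom_comp, id_comp, comp_id,
      hAD.μ_nat, K.F.map_comp, assoc]
  pentagon K p n m := plin_hom_ext fun d => by
    show K.F.map (AD.actHom (𝟙 p) (AD.μ n m d))
          ≫ K.F.map (AD.μ p (n ⊗ m) d)
          ≫ K.F.map (AD.actHom (α_ p n m).inv (𝟙 d)) ≫ 𝟙 (K.F.obj (AD.actObj ((p ⊗ n) ⊗ m) d))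
        = (K.F.map (AD.actHom (𝟙 p) (AD.actHom (𝟙 n) (AD.actHom (𝟙 m) (𝟙 d))))
            ≫ K.F.map (AD.μ p n (AD.actObj m d)))
          ≫ K.F.map (AD.μ (p ⊗ n) m d)
    simp only [hAD.actHom_id, K.F.map_id, id_comp, comp_id]
    rw [← K.F.map_comp, ← K.F.map_comp, ← K.F.map_comp, left_pentagon_inv hAD]
  triangle_left K m := plin_hom_ext fun d => by
    show K.F.map (AD.actHom (𝟙 m) (AD.η d)) ≫ K.F.map (AD.μ m (𝟙_ M) d)
        = K.F.map (AD.actHom (ρ_ m).inv (𝟙 d)) ≫ 𝟙 _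
    rw [comp_id, ← K.F.map_comp, hAD.triangle_right]
  triangle_right K m := plin_hom_ext fun d => by
    show (K.F.map (AD.actHom (𝟙 m) (𝟙 d)) ≫ K.F.map (AD.η (AD.actObj m d)))
          ≫ K.F.map (AD.μ (𝟙_ M) m d)
        = K.F.map (AD.actHom (λ_ m).inv (𝟙 d)) ≫ 𝟙 _
    rw [hAD.actHom_id, K.F.map_id, id_comp, comp_id, ← K.F.map_comp, hAD.triangle_left]

lemma isBi_Zmod (AD : LeftActegoryData M C) (hAD : IsLeftActegory AD)
    (hRD : IsRightActegory RD) (ZD : BimodulatorData AD RD) (hZD : IsBiactegory ZD)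
    (AE : LeftActegoryData N D) (hAE : IsLeftActegory AE)
    (ZE : BimodulatorData AE RE) (hZE : IsBiactegory ZE) :
    IsBiactegory (Zmod (RE := RE) (hRE := hRE) AD hAD hRD ZD hZD AE hAE ZE hZE) where
  ζ_iso n K m := plin_hom_ext fun d => by
    show 𝟙 (AE.actObj n (K.F.obj (AD.actObj m d))) ≫ 𝟙 _ = 𝟙 _
    rw [comp_id]
  ζ'_iso n K m := plin_hom_ext fun d => by
    show 𝟙 (AE.actObj n (K.F.obj (AD.actObj m d))) ≫ 𝟙 _ = 𝟙 _
    rw [comp_id]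
  ζ_nat {n n' K K' m m'} g ξ h := plin_hom_ext fun d => by
    show AE.actHom g (K.F.map (AD.actHom h (𝟙 d)) ≫ ξ.t.app (AD.actObj m' d)) ≫ 𝟙 _
        = 𝟙 _ ≫ AE.actHom (𝟙 n) (K.F.map (AD.actHom h (𝟙 d)))
            ≫ AE.actHom g (ξ.t.app (AD.actObj m' d))
    rw [comp_id, id_comp, ← hAE.actHom_comp, id_comp]
  pentagon_left n n' K m := plin_hom_ext fun d => by
    show AE.μ n n' (K.F.obj (AD.actObj m d)) ≫ 𝟙 _
        = AE.actHom (𝟙 n) (𝟙 (AE.actObj n' (K.F.obj (AD.actObj m d))))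
          ≫ 𝟙 _
          ≫ AE.actHom (𝟙 n) (AE.actHom (𝟙 n') (K.F.map (AD.actHom (𝟙 m) (𝟙 d))))
            ≫ AE.μ n n' (K.F.obj (AD.actObj m d))
    simp only [hAD.actHom_id, K.F.map_id, hAE.actHom_id, id_comp, comp_id]
  pentagon_right n K m m' := plin_hom_ext fun d => by
    show AE.actHom (𝟙 n) (K.F.map (AD.μ m m' d)) ≫ 𝟙 (AE.actObj n (K.F.obj (AD.actObj (m ⊗ m') d)))
        = 𝟙 (AE.actObj n (K.F.obj (AD.actObj m (AD.actObj m' d))))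
          ≫ (AE.actHom (𝟙 n) (K.F.map (AD.actHom (𝟙 m) (AD.actHom (𝟙 m') (𝟙 d))))
              ≫ 𝟙 (AE.actObj n (K.F.obj (AD.actObj m (AD.actObj m' d)))))
            ≫ AE.actHom (𝟙 n) (K.F.map (AD.μ m m' d))
    simp only [hAD.actHom_id, K.F.map_id, hAE.actHom_id, id_comp, comp_id]
  triangle_unit_left K m := plin_hom_ext fun d => by
    show AE.η (K.F.obj (AD.actObj m d)) ≫ 𝟙 _
        = K.F.map (AD.actHom (𝟙 m) (𝟙 d)) ≫ AE.η (K.F.obj (AD.actObj m d))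
    rw [comp_id, hAD.actHom_id, K.F.map_id, id_comp]
  triangle_unit_right n K := plin_hom_ext fun d => by
    show AE.actHom (𝟙 n) (K.F.map (AD.η d)) ≫ 𝟙 _
        = AE.actHom (𝟙 n) (K.F.map (AD.η d))
    rw [comp_id]

end Construction

/-- **Statement 19.** Let `D` be an `(M,P)`-biactegory and `E` an `(N,P)`-biactegory.
Then the category `[D,E]_P` of strong right `P`-linear functors and `P`-linear
transformations is an `(N,M)`-biactegory: the left `N`-action is pointwise
`(n • F) d := n •_E F d` (with lineator built from `(ζ^E)⁻¹` and `r`), the right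
`M`-action is `(F • m) d := F (m •_D d)` (with lineator built from `r` and
`F (ζ^D)⁻¹`), the unitors and multiplicators are given pointwise by those of `E`
and `D` respectively, and the bimodulator is pointwise the identity.  All the right
`P`-linearity conditions, the actegory coherences and the biactegory coherences
hold for these data. -/
theorem internalHom_is_biactegory
    (AD : LeftActegoryData M C) (hAD : IsLeftActegory AD)
    (RD : RightActegoryData C P) (hRD : IsRightActegory RD)
    (ZD : BimodulatorData AD RD) (hZD : IsBiactegory ZD)
    (AE : LeftActegoryData N D) (hAE : IsLeftActegory AE)
    (RE : RightActegoryData D P) (hRE : IsRightActegory RE)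
    (ZE : BimodulatorData AE RE) (hZE : IsBiactegory ZE) :
    ∃ (L : LeftActegoryData N (PLin RD RE hRE))
      (R : RightActegoryData (PLin RD RE hRE) M)
      (Z : BimodulatorData L R),
      -- the left `N`-action is pointwise that of `E`
      (∀ (n : N) (K : PLin RD RE hRE) (d : C),
        (L.actObj n K).F.obj d = AE.actObj n (K.F.obj d)) ∧
      (∀ (n : N) (K : PLin RD RE hRE) (d : C) (p : P),
        HEq ((L.actObj n K).r d p) (ZE.ζ' n (K.F.obj d) p ≫ AE.actHom (𝟙 n) (K.r d p))) ∧
      (∀ (n : N) (K : PLin RD RE hRE) {d d' : C} (f : d ⟶ d'),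
        HEq ((L.actObj n K).F.map f) (AE.actHom (𝟙 n) (K.F.map f))) ∧
      (∀ {n n' : N} (g : n ⟶ n') {K K' : PLin RD RE hRE} (ξ : K ⟶ K') (d : C),
        HEq ((L.actHom g ξ).t.app d) (AE.actHom g (ξ.t.app d))) ∧
      (∀ (K : PLin RD RE hRE) (d : C), HEq ((L.η K).t.app d) (AE.η (K.F.obj d))) ∧
      (∀ (n n' : N) (K : PLin RD RE hRE) (d : C),
        HEq ((L.μ n n' K).t.app d) (AE.μ n n' (K.F.obj d))) ∧
      -- the right `M`-action is pointwise precomposition with that of `D`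
      (∀ (K : PLin RD RE hRE) (m : M) (d : C),
        (R.actObj K m).F.obj d = K.F.obj (AD.actObj m d)) ∧
      (∀ (K : PLin RD RE hRE) (m : M) (d : C) (p : P),
        HEq ((R.actObj K m).r d p) (K.r (AD.actObj m d) p ≫ K.F.map (ZD.ζ' m d p))) ∧
      (∀ (K : PLin RD RE hRE) (m : M) {d d' : C} (f : d ⟶ d'),
        HEq ((R.actObj K m).F.map f) (K.F.map (AD.actHom (𝟙 m) f))) ∧
      (∀ {K K' : PLin RD RE hRE} (ξ : K ⟶ K') {m m' : M} (g : m ⟶ m') (d : C),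
        HEq ((R.actHom ξ g).t.app d)
          (K.F.map (AD.actHom g (𝟙 d)) ≫ ξ.t.app (AD.actObj m' d))) ∧
      (∀ (K : PLin RD RE hRE) (d : C), HEq ((R.η K).t.app d) (K.F.map (AD.η d))) ∧
      (∀ (K : PLin RD RE hRE) (m m' : M) (d : C),
        HEq ((R.μ K m m').t.app d) (K.F.map (AD.μ m m' d))) ∧
      -- the bimodulator is pointwise the identity
      (∀ (n : N) (K : PLin RD RE hRE) (m : M) (d : C),
        HEq ((Z.ζ n K m).t.app d) (𝟙 (AE.actObj n (K.F.obj (AD.actObj m d))))) ∧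
      -- all the coherences hold
      IsLeftActegory L ∧ IsRightActegory R ∧ IsBiactegory Z := by
  refine ⟨Lact AE hAE ZE hZE, Ract AD hAD hRD ZD hZD,
    Zmod AD hAD hRD ZD hZD AE hAE ZE hZE,
    ?_, ?_, ?_, ?_, ?_, ?_, ?_, ?_, ?_, ?_, ?_, ?_, ?_,
    isLeft_Lact AE hAE ZE hZE, isRight_Ract AD hAD hRD ZD hZD,
    isBi_Zmod AD hAD hRD ZD hZD AE hAE ZE hZE⟩ <;>
    intros <;> first | rfl | exact HEq.rfl
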